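/- Let (X,d) be a complete metric space, k ∈ ℕ, and T : X^ℕ → X satisfy: for all u₁,…,u_k, v₁,…,v_k ∈ X, d(T(û), T(v̂)) ≤ β(M_k(û, v̂))·M_k(û, v̂), where û, v̂ are the hatted sequences with k-th entry repeated, β is a Geraghty function, and M_k(û, v̂) = max{ d(u_k, v_k), d(u_k, T(û)), d(v_k, T(v̂)) }. Then there exists u ∈ X such that T applied to the constant sequence (u,u,…) equals u, and the infinite k-Picard sequence from any base points x₁,…,x_k converges to u. -/

import Mathlib

open Filter Topology

def IsGeraghty (β : ℝ → ℝ) : Prop :=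
  (∀ t : ℝ, 0 ≤ t → 0 ≤ β t ∧ β t < 1) ∧
  (∀ t : ℕ → ℝ, (∀ n, 0 ≤ t n) →
    Filter.Tendsto (fun n => β (t n)) Filter.atTop (nhds 1) →
    Filter.Tendsto t Filter.atTop (nhds 0))

def hatSeq {X : Type*} (k : ℕ) (hk : 0 < k) (u : Fin k → X) : ℕ → X :=
  fun i => u ⟨min i (k - 1), by omega⟩

private lemma geraghty_cauchy {X : Type*} [MetricSpace X] (β : ℝ → ℝ) (hβ : IsGeraghty β)
    (y : ℕ → X)
    (hy : ∀ m n : ℕ, dist (y (m+1)) (y (n+1)) ≤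
      β (max (dist (y m) (y n)) (max (dist (y m) (y (m+1))) (dist (y n) (y (n+1))))) *
      max (dist (y m) (y n)) (max (dist (y m) (y (m+1))) (dist (y n) (y (n+1))))) :
    CauchySeq y := by
  classical
  have hd0 : ∀ n, (0:ℝ) ≤ dist (y n) (y (n+1)) := fun n => dist_nonneg
  have hstep : ∀ n, dist (y (n+1)) (y (n+1+1)) ≤ dist (y n) (y (n+1)) ∧
      dist (y (n+1)) (y (n+1+1)) ≤ β (dist (y n) (y (n+1))) * dist (y n) (y (n+1)) := by
    intro n
    have h := hy n (n+1)
    rw [← max_assoc, max_self] at h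
    have hba : dist (y (n+1)) (y (n+1+1)) ≤ dist (y n) (y (n+1)) := by
      by_contra hc
      push_neg at hc
      rw [max_eq_right hc.le] at h
      have hb1 := (hβ.1 _ (hd0 (n+1))).2
      have hb0 : (0:ℝ) < dist (y (n+1)) (y (n+1+1)) := lt_of_le_of_lt (hd0 n) hc
      nlinarith
    rw [max_eq_left hba] at h
    exact ⟨hba, h⟩
  set d : ℕ → ℝ := fun n => dist (y n) (y (n+1)) with hdd
  have hanti : Antitone d := antitone_nat_of_succ_le (fun n => (hstep n).1)
  have hbdd : BddBelow (Set.range d) := ⟨0, by rintro _ ⟨n, rfl⟩; exact hd0 n⟩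
  have hL : Tendsto d atTop (𝓝 (⨅ n, d n)) := tendsto_atTop_ciInf hanti hbdd
  set L := ⨅ n, d n with hLdef
  have hL0 : 0 ≤ L := le_ciInf hd0
  have hLd : ∀ n, L ≤ d n := fun n => ciInf_le hbdd n
  have hdz : Tendsto d atTop (𝓝 0) := by
    have hLzero : L = 0 := by
      by_contra hne
      have hLpos : 0 < L := hL0.lt_of_ne (Ne.symm hne)
      have hshift : Tendsto (fun n => d (n+1)) atTop (𝓝 L) :=
        hL.comp (tendsto_add_atTop_nat 1)
      have h1 : Tendsto (fun n => d (n+1) / d n) atTop (𝓝 1) := by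
        have := hshift.div hL (ne_of_gt hLpos)
        rw [div_self (ne_of_gt hLpos)] at this
        exact this
      have h2 : Tendsto (fun n => β (d n)) atTop (𝓝 1) := by
        refine tendsto_of_tendsto_of_tendsto_of_le_of_le h1 tendsto_const_nhds ?_ ?_
        · intro n
          have hdn : 0 < d n := lt_of_lt_of_le hLpos (hLd n)
          exact (div_le_iff₀ hdn).2 (hstep n).2
        · exact fun n => ((hβ.1 _ (hd0 n)).2).le
      have := hβ.2 d hd0 h2
      exact hne (tendsto_nhds_unique hL this)
    rwa [hLzero] at hL
  -- Cauchy via contradiction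
  rw [Metric.cauchySeq_iff]
  by_contra hcauchy
  push_neg at hcauchy
  obtain ⟨ε, hε, H⟩ := hcauchy
  -- select pairs m i < n i
  have key : ∀ i : ℕ, ∃ m n : ℕ, i ≤ m ∧ m < n ∧ ε ≤ dist (y m) (y n) ∧
      dist (y m) (y (n-1)) ≤ ε := by
    intro i
    obtain ⟨m0, hm0, n0, hn0, hdist⟩ := H i
    have hne : m0 ≠ n0 := by
      rintro rfl; rw [dist_self] at hdist; linarith
    set m := min m0 n0 with hm
    have hPex : ∃ j, m < j ∧ ε ≤ dist (y m) (y j) := by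
      refine ⟨max m0 n0, ?_, ?_⟩
      · omega
      · rcases le_total m0 n0 with h | h
        · rw [hm, min_eq_left h, max_eq_right h]; exact hdist
        · rw [hm, min_eq_right h, max_eq_left h, dist_comm]; exact hdist
    set n := Nat.find hPex with hn
    obtain ⟨hmn, hdmn⟩ := Nat.find_spec hPex
    refine ⟨m, n, le_min hm0 hn0, hmn, hdmn, ?_⟩
    rcases eq_or_lt_of_le (Nat.succ_le_of_lt hmn) with h | h
    · rw [show n - 1 = m by omega, dist_self]; exact hε.le
    · have hmin := Nat.find_min hPex (m := n - 1) (by omega)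
      push_neg at hmin
      exact (hmin (by omega)).le
  choose m n hm hmn hge hle using key
  set g : ℕ → ℝ := fun i => dist (y (m i)) (y (n i)) with hg
  have hgub : ∀ i, g i ≤ ε + d i := by
    intro i
    have h1 : g i ≤ dist (y (m i)) (y (n i - 1)) + dist (y (n i - 1)) (y (n i)) :=
      dist_triangle _ _ _
    have h2 : dist (y (n i - 1)) (y (n i)) = d (n i - 1) := by
      have h := hmn i
      rw [hdd]
      simp only []
      rw [show n i - 1 + 1 = n i from by omega]
    have h3 : d (n i - 1) ≤ d i := hanti (by have h1 := hm i; have h2 := hmn i; omega)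
    calc g i ≤ dist (y (m i)) (y (n i - 1)) + d (n i - 1) := by rw [← h2]; exact h1
      _ ≤ ε + d i := add_le_add (hle i) h3
  have hgt : Tendsto g atTop (𝓝 ε) := by
    refine tendsto_of_tendsto_of_tendsto_of_le_of_le tendsto_const_nhds ?_ hge hgub
    simpa using (tendsto_const_nhds (x := ε) (f := atTop (α := ℕ))).add hdz
  set M : ℕ → ℝ := fun i => max (g i) (max (d (m i)) (d (n i))) with hM
  have hMge : ∀ i, ε ≤ M i := fun i => le_max_of_le_left (hge i)
  have hMub : ∀ i, M i ≤ ε + d i := by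
    intro i
    refine max_le (hgub i) (max_le ?_ ?_)
    · exact le_add_of_nonneg_of_le hε.le (hanti (hm i))
    · exact le_add_of_nonneg_of_le hε.le (hanti (le_trans (hm i) (hmn i).le))
  have hMt : Tendsto M atTop (𝓝 ε) := by
    refine tendsto_of_tendsto_of_tendsto_of_le_of_le tendsto_const_nhds ?_ hMge hMub
    simpa using (tendsto_const_nhds (x := ε) (f := atTop (α := ℕ))).add hdz
  have hMpos : ∀ i, 0 < M i := fun i => lt_of_lt_of_le hε (hMge i)
  have hkey : ∀ i, ε - 2 * d i ≤ β (M i) * M i := by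
    intro i
    have h := hy (m i) (n i)
    have htri : g i ≤ d (m i) + dist (y (m i + 1)) (y (n i + 1)) + d (n i) := by
      have := dist_triangle4 (y (m i)) (y (m i + 1)) (y (n i + 1)) (y (n i))
      rw [hg, hdd]
      simpa [dist_comm (y (n i + 1)) (y (n i))] using this
    have hdm : d (m i) ≤ d i := hanti (hm i)
    have hdn : d (n i) ≤ d i := hanti (le_trans (hm i) (hmn i).le)
    have hεg : ε ≤ g i := hge i
    nlinarith [h]
  have hβt : Tendsto (fun i => β (M i)) atTop (𝓝 1) := by
    have hlow : Tendsto (fun i => (ε - 2 * d i) / M i) atTop (𝓝 1) := by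
      have hnum : Tendsto (fun i => ε - 2 * d i) atTop (𝓝 ε) := by
        simpa using (tendsto_const_nhds (x := ε) (f := atTop (α := ℕ))).sub (hdz.const_mul 2)
      have := hnum.div hMt (ne_of_gt hε)
      rw [div_self (ne_of_gt hε)] at this
      exact this
    refine tendsto_of_tendsto_of_tendsto_of_le_of_le hlow tendsto_const_nhds ?_ ?_
    · intro i
      exact (div_le_iff₀ (hMpos i)).2 (hkey i)
    · exact fun i => ((hβ.1 _ (hMpos i).le).2).le
  have hM0 : Tendsto M atTop (𝓝 0) := hβ.2 M (fun i => (hMpos i).le) hβt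
  have : ε ≤ 0 := le_of_tendsto_of_tendsto' tendsto_const_nhds hM0 hMge
  linarith

private def Fmap {X : Type*} (k : ℕ) (hk : 0 < k) (T : (ℕ → X) → X) (a : Fin k → X) : X :=
  T (hatSeq k hk a)

private lemma picard_tendsto {X : Type*} [MetricSpace X] [CompleteSpace X]
    (k : ℕ) (hk : 0 < k) (β : ℝ → ℝ) (hβ : IsGeraghty β) (T : (ℕ → X) → X)
    (hT : ∀ a b : Fin k → X,
      dist (Fmap k hk T a) (Fmap k hk T b) ≤
        β (max (dist (a ⟨k - 1, Nat.sub_lt hk Nat.one_pos⟩) (b ⟨k - 1, Nat.sub_lt hk Nat.one_pos⟩))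
            (max (dist (a ⟨k - 1, Nat.sub_lt hk Nat.one_pos⟩) (Fmap k hk T a))
              (dist (b ⟨k - 1, Nat.sub_lt hk Nat.one_pos⟩) (Fmap k hk T b)))) *
          max (dist (a ⟨k - 1, Nat.sub_lt hk Nat.one_pos⟩) (b ⟨k - 1, Nat.sub_lt hk Nat.one_pos⟩))
            (max (dist (a ⟨k - 1, Nat.sub_lt hk Nat.one_pos⟩) (Fmap k hk T a))
              (dist (b ⟨k - 1, Nat.sub_lt hk Nat.one_pos⟩) (Fmap k hk T b))))
    (x : ℕ → X) (hx : ∀ n, x (n + k) = Fmap k hk T (fun i : Fin k => x (n + i))) :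
    ∃ u : X, Fmap k hk T (fun _ => u) = u ∧ Tendsto x atTop (𝓝 u) := by
  classical
  set y : ℕ → X := fun n => x (n + (k - 1)) with hydef
  have hrec : ∀ n, y (n + 1) = Fmap k hk T (fun i : Fin k => x (n + i)) := by
    intro n
    show x (n + 1 + (k - 1)) = _
    rw [show n + 1 + (k - 1) = n + k from by omega]
    exact hx n
  have hy' : ∀ m n : ℕ, dist (y (m+1)) (y (n+1)) ≤
      β (max (dist (y m) (y n)) (max (dist (y m) (y (m+1))) (dist (y n) (y (n+1))))) *
      max (dist (y m) (y n)) (max (dist (y m) (y (m+1))) (dist (y n) (y (n+1)))) := by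
    intro m n
    have h := hT (fun i : Fin k => x (m + i)) (fun i : Fin k => x (n + i))
    rw [← hrec m, ← hrec n] at h
    exact h
  obtain ⟨u, hu⟩ := cauchySeq_tendsto_of_complete (geraghty_cauchy β hβ y hy')
  set S : X := Fmap k hk T (fun _ : Fin k => u) with hSdef
  have hSy : ∀ n, dist (y (n+1)) S ≤
      β (max (dist (y n) u) (max (dist (y n) (y (n+1))) (dist u S))) *
      max (dist (y n) u) (max (dist (y n) (y (n+1))) (dist u S)) := by
    intro n
    have h := hT (fun i : Fin k => x (n + i)) (fun _ : Fin k => u)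
    rw [← hrec n] at h
    exact h
  have hfix : S = u := by
    by_contra hne
    have hrpos : 0 < dist u S := dist_pos.2 (fun h => hne h.symm)
    have hd1 : Tendsto (fun n => dist (y n) u) atTop (𝓝 0) := by
      simpa using hu.dist (tendsto_const_nhds (x := u))
    have hd2 : Tendsto (fun n => dist (y n) (y (n+1))) atTop (𝓝 0) := by
      simpa using hu.dist (hu.comp (tendsto_add_atTop_nat 1))
    have hev : ∀ᶠ n in atTop,
        dist (y n) u < dist u S ∧ dist (y n) (y (n+1)) < dist u S :=
      (hd1.eventually (gt_mem_nhds hrpos)).and (hd2.eventually (gt_mem_nhds hrpos))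
    have hbound : ∀ᶠ n in atTop, dist (y (n+1)) S ≤ β (dist u S) * dist u S := by
      filter_upwards [hev] with n hn
      have h := hSy n
      rw [max_eq_right hn.2.le, max_eq_right hn.1.le] at h
      exact h
    have hlim : Tendsto (fun n => dist (y (n+1)) S) atTop (𝓝 (dist u S)) :=
      (hu.comp (tendsto_add_atTop_nat 1)).dist (tendsto_const_nhds (x := S))
    have hfinal : dist u S ≤ β (dist u S) * dist u S := le_of_tendsto hlim hbound
    have hβlt := (hβ.1 _ (dist_nonneg (x := u) (y := S))).2
    nlinarith
  refine ⟨u, hfix, ?_⟩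
  exact (tendsto_add_atTop_iff_nat (k - 1)).1 hu

private def gseq {X : Type*} (k : ℕ) (hk : 0 < k) (T : (ℕ → X) → X) (x0 : X) :
    ℕ → Fin k → X
  | 0 => fun _ => x0
  | n+1 => fun i =>
      if h : (i : ℕ) + 1 < k then gseq k hk T x0 n ⟨(i : ℕ) + 1, h⟩
      else Fmap k hk T (gseq k hk T x0 n)

private def xseq {X : Type*} (k : ℕ) (hk : 0 < k) (T : (ℕ → X) → X) (x0 : X) (n : ℕ) : X :=
  if n < k then x0 else Fmap k hk T (gseq k hk T x0 (n - k))

private lemma xseq_g {X : Type*} (k : ℕ) (hk : 0 < k) (T : (ℕ → X) → X) (x0 : X) :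
    ∀ n (i : Fin k), xseq k hk T x0 (n + i) = gseq k hk T x0 n i := by
  intro n
  induction n with
  | zero =>
    intro i
    have hik := i.2
    simp [xseq, gseq, hik]
  | succ n ih =>
    intro i
    by_cases h : (i : ℕ) + 1 < k
    · have e : n + 1 + (i : ℕ) = n + ((⟨(i : ℕ) + 1, h⟩ : Fin k) : ℕ) := by
        simp; omega
      rw [e, ih ⟨(i : ℕ) + 1, h⟩]
      simp [gseq, h]
    · have e : n + 1 + (i : ℕ) = n + k := by
        have := i.2; omega
      rw [e]
      have h1 : ¬ (n + k < k) := by omega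
      simp [xseq, gseq, h, h1]

private lemma xseq_rec {X : Type*} (k : ℕ) (hk : 0 < k) (T : (ℕ → X) → X) (x0 : X) :
    ∀ n, xseq k hk T x0 (n + k) = Fmap k hk T (fun i : Fin k => xseq k hk T x0 (n + i)) := by
  intro n
  have h1 : (fun i : Fin k => xseq k hk T x0 (n + i)) = gseq k hk T x0 n :=
    funext (xseq_g k hk T x0 n)
  rw [h1]
  have h2 : ¬ (n + k < k) := by omega
  simp [xseq, h2]

theorem Hk_contraction_fixed_point {X : Type*} [MetricSpace X] [CompleteSpace X] [Nonempty X]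
    (k : ℕ) (hk : 0 < k) (β : ℝ → ℝ) (hβ : IsGeraghty β) (T : (ℕ → X) → X)
    (hT : ∀ a b : Fin k → X,
      dist (T (hatSeq k hk a)) (T (hatSeq k hk b)) ≤
        β (max (dist (a ⟨k - 1, by omega⟩) (b ⟨k - 1, by omega⟩))
            (max (dist (a ⟨k - 1, by omega⟩) (T (hatSeq k hk a)))
              (dist (b ⟨k - 1, by omega⟩) (T (hatSeq k hk b))))) *
          max (dist (a ⟨k - 1, by omega⟩) (b ⟨k - 1, by omega⟩))
            (max (dist (a ⟨k - 1, by omega⟩) (T (hatSeq k hk a)))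
              (dist (b ⟨k - 1, by omega⟩) (T (hatSeq k hk b))))) :
    ∃ u : X, T (fun _ => u) = u ∧
      ∀ x : ℕ → X, (∀ n, x (n + k) = T (hatSeq k hk (fun i : Fin k => x (n + i)))) →
        Tendsto x atTop (𝓝 u) := by
  classical
  have hconst : ∀ u : X, hatSeq k hk (fun _ => u) = fun _ => u := by
    intro u; funext i; rfl
  have hT' : ∀ a b : Fin k → X,
      dist (Fmap k hk T a) (Fmap k hk T b) ≤
        β (max (dist (a ⟨k - 1, by omega⟩) (b ⟨k - 1, by omega⟩))
            (max (dist (a ⟨k - 1, by omega⟩) (Fmap k hk T a))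
              (dist (b ⟨k - 1, by omega⟩) (Fmap k hk T b)))) *
          max (dist (a ⟨k - 1, by omega⟩) (b ⟨k - 1, by omega⟩))
            (max (dist (a ⟨k - 1, by omega⟩) (Fmap k hk T a))
              (dist (b ⟨k - 1, by omega⟩) (Fmap k hk T b))) := hT
  obtain ⟨u, hufix, hutend⟩ :=
    picard_tendsto k hk β hβ T hT' (xseq k hk T (Classical.arbitrary X))
      (xseq_rec k hk T (Classical.arbitrary X))
  have hu2 : T (fun _ => u) = u := (congrArg T (hconst u)).symm.trans hufix
  refine ⟨u, hu2, ?_⟩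
  intro x hx
  have hx' : ∀ n, x (n + k) = Fmap k hk T (fun i : Fin k => x (n + i)) := hx
  obtain ⟨u', hu'fix, hu'tend⟩ := picard_tendsto k hk β hβ T hT' x hx'
  have hu'2 : T (fun _ => u') = u' := (congrArg T (hconst u')).symm.trans hu'fix
  have huu : u' = u := by
    have h := hT (fun _ : Fin k => u') (fun _ : Fin k => u)
    rw [hconst u', hconst u, hu'2, hu2] at h
    simp only [dist_self, max_self] at h
    rw [max_eq_left dist_nonneg] at h
    by_contra hne
    have hpos : 0 < dist u' u := dist_pos.2 hne
    have hβlt := (hβ.1 _ (dist_nonneg (x := u') (y := u))).2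
    nlinarith
  rwa [huu] at hu'tend
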